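/- Fix d ≥ 1, real numbers L_f > μ_f > 0, α > 0, set β = 4μ_f/(L_f - μ_f), κ_f = L_f/μ_f, and q = (√κ_f - 1)/(√κ_f + 1). Define x* ∈ ℝ^d by x*_i = α(q^i + q^{2d+1-i})/(1 + q^{2d+1}). Then x* satisfies the tridiagonal system: (2+β)x*_1 - x*_2 = α; -x*_{i-1} + (2+β)x*_i - x*_{i+1} = 0 for 2 ≤ i ≤ d-1; and -x*_{d-1} + (1+β)x*_d = 0. -/

import Mathlib

open Real

/-- For `d ≥ 1`, `L_f > μ_f > 0`, `α > 0`, `β = 4μ_f/(L_f-μ_f)`, `κ_f = L_f/μ_f`,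
`q = (√κ_f - 1)/(√κ_f + 1)`, the vector `x*_i = α(qⁱ + q^{2d+1-i})/(1 + q^{2d+1})`
solves the tridiagonal system `(2+β)x*_1 - x*_2 = α`,
`-x*_{i-1} + (2+β)x*_i - x*_{i+1} = 0` for `2 ≤ i ≤ d-1`, and
`-x*_{d-1} + (1+β)x*_d = 0`. -/
theorem tridiagonal_system_solution
    (d : ℕ) (hd : 1 ≤ d) (Lf μf α : ℝ) (hμ : 0 < μf) (hL : μf < Lf) (hα : 0 < α)
    (β q : ℝ) (hβ : β = 4 * μf / (Lf - μf))
    (hq : q = (Real.sqrt (Lf / μf) - 1) / (Real.sqrt (Lf / μf) + 1))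
    (xs : ℕ → ℝ)
    (hxs : ∀ i, i ≤ 2 * d + 1 →
      xs i = α * (q ^ i + q ^ (2 * d + 1 - i)) / (1 + q ^ (2 * d + 1))) :
    (2 + β) * xs 1 - xs 2 = α ∧
      (∀ i, 2 ≤ i → i ≤ d - 1 →
        -xs (i - 1) + (2 + β) * xs i - xs (i + 1) = 0) ∧
      -xs (d - 1) + (1 + β) * xs d = 0 := by
  set s := Real.sqrt (Lf / μf) with hs
  have hrpos : (1:ℝ) < Lf / μf := (one_lt_div hμ).mpr hL
  have hs1 : 1 < s := by
    rw [hs, show (1:ℝ) = Real.sqrt 1 by simp]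
    exact Real.sqrt_lt_sqrt (by norm_num) hrpos
  have hs2 : s ^ 2 = Lf / μf := Real.sq_sqrt (le_of_lt (lt_trans one_pos hrpos))
  have hq0 : 0 < q := by
    rw [hq]
    exact div_pos (by linarith) (by linarith)
  have hLm : Lf - μf ≠ 0 := by
    have : μf * (Lf / μf) = Lf := mul_div_cancel₀ Lf (ne_of_gt hμ)
    nlinarith [hs2]
  -- key quadratic relation: (2+β) q = q² + 1
  have hkey : (2 + β) * q = q ^ 2 + 1 := by
    have hLf : Lf = μf * s ^ 2 := by
      field_simp [ne_of_gt hμ] at hs2; linarith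
    rw [hβ, hq, hLf]
    have h1 : s + 1 ≠ 0 := by linarith
    have h2 : μf * s ^ 2 - μf ≠ 0 := by
      have : Lf - μf = μf * s ^ 2 - μf := by rw [hLf]
      rwa [this] at hLm
    have h3 : s ^ 2 - 1 ≠ 0 := by nlinarith
    field_simp
    ring
  have hD : 0 < 1 + q ^ (2 * d + 1) := by positivity
  have hDne : 1 + q ^ (2 * d + 1) ≠ 0 := ne_of_gt hD
  obtain ⟨c, rfl⟩ : ∃ c, d = c + 1 := ⟨d - 1, by omega⟩
  refine ⟨?_, ?_, ?_⟩
  · rw [hxs 1 (by omega), hxs 2 (by omega)]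
    have e1 : 2 * (c + 1) + 1 - 1 = 2 * c + 2 := by omega
    have e2 : 2 * (c + 1) + 1 - 2 = 2 * c + 1 := by omega
    have e3 : 2 * (c + 1) + 1 = 2 * c + 3 := by omega
    rw [e3] at hDne
    rw [e1, e2, e3]
    field_simp
    linear_combination (1 + q ^ (2 * c + 1)) * hkey
  · intro i hi2 hid
    obtain ⟨a, rfl⟩ : ∃ a, i = a + 2 := ⟨i - 2, by omega⟩
    obtain ⟨b, hb⟩ : ∃ b, 2 * (c + 1) + 1 = (a + 3) + b := ⟨2 * (c + 1) + 1 - (a + 3), by omega⟩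
    rw [hxs (a + 2 - 1) (by omega), hxs (a + 2) (by omega), hxs (a + 2 + 1) (by omega)]
    have e1 : a + 2 - 1 = a + 1 := by omega
    have e2 : 2 * (c + 1) + 1 - (a + 1) = b + 2 := by omega
    have e3 : 2 * (c + 1) + 1 - (a + 2) = b + 1 := by omega
    have e4 : 2 * (c + 1) + 1 - (a + 2 + 1) = b := by omega
    rw [hb] at hDne
    rw [e1, e2, e3, e4, hb]
    field_simp
    linear_combination α * (q ^ (a + 1) + q ^ b) * hkey
  · rw [hxs (c + 1 - 1) (by omega), hxs (c + 1) (by omega)]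
    have e1 : c + 1 - 1 = c := by omega
    have e2 : 2 * (c + 1) + 1 - c = c + 3 := by omega
    have e3 : 2 * (c + 1) + 1 - (c + 1) = c + 2 := by omega
    have e4 : 2 * (c + 1) + 1 = 2 * c + 3 := by omega
    rw [e4] at hDne
    rw [e1, e2, e3, e4]
    field_simp
    linear_combination α * (q ^ c + q ^ (c + 1)) * hkey
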